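/- With A, ∂, t and the residue pairing as above, the pairing ⟨x, g⟩ = Res_{s=0}(x(s)g(-s)) on I^{a,b} × I^{-b,-a} → A is horizontal for the connections: ∂⟨x, g⟩ = ⟨∂x, g⟩ + ⟨x, ∂g⟩ for all x ∈ I^{a,b}, g ∈ I^{-b,-a}, where the connection on each factor is induced by ∂(s^l h·t^s) = s^l ∂(h)·t^s + s^{l+1}(h/t)·t^s. -/

import Mathlib

open LaurentPolynomial

variable {A : Type*} [CommRing A]

/-- The connection `∂` on the free module `A[s,s⁻¹]·t^s` of rank one
(identified with `A[s,s⁻¹]` via the generator `t^s`), defined by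
`∂(s^l g · t^s) = s^l ∂(g) · t^s + s^{l+1} (g/t) · t^s`. -/
noncomputable def DM (D : Derivation ℤ A A) (t : Aˣ) (x : LaurentPolynomial A) :
    LaurentPolynomial A :=
  let y : LaurentPolynomial A := AddMonoidAlgebra.ofCoeff (Finsupp.mapRange ⇑D (map_zero D) x.coeff)
  y + T 1 * C (↑t⁻¹ : A) * x

/-- The residue pairing `⟨x, g⟩ = Res_{s=0}(x(s) g(-s))`, the coefficient of `s⁻¹`
in `x(s)·g(-s)`: concretely `∑_k (-1)^{k+1} x_k g_{-1-k}`. -/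
noncomputable def resPair (x g : LaurentPolynomial A) : A :=
  x.coeff.sum fun k c => ((Int.negOnePow (k + 1) : ℤˣ) : ℤ) • (c * g.coeff (-1 - k))

/-- `s^c A[s]·t^s`: the `A`-submodule of `A[s,s⁻¹]·t^s` spanned by `s^k t^s`, `k ≥ c`. -/
noncomputable def Ipow (c : ℤ) : Submodule A (LaurentPolynomial A) :=
  Submodule.span A ((fun k : ℤ => (T k : LaurentPolynomial A)) '' {k : ℤ | c ≤ k})

lemma resPair_add_left (x₁ x₂ g : LaurentPolynomial A) :
    resPair (x₁ + x₂) g = resPair x₁ g + resPair x₂ g := by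
  unfold resPair
  rw [AddMonoidAlgebra.coeff_add]
  apply Finsupp.sum_add_index'
  · intro k; simp
  · intro k c₁ c₂; rw [add_mul, smul_add]

lemma resPair_add_right (x g₁ g₂ : LaurentPolynomial A) :
    resPair x (g₁ + g₂) = resPair x g₁ + resPair x g₂ := by
  unfold resPair
  rw [← Finsupp.sum_add]
  apply Finsupp.sum_congr
  intro k _
  rw [AddMonoidAlgebra.coeff_add, Finsupp.add_apply, mul_add, smul_add]

lemma resPair_zero_left (g : LaurentPolynomial A) : resPair (0 : LaurentPolynomial A) g = 0 := by
  simp [resPair]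

lemma resPair_zero_right (x : LaurentPolynomial A) : resPair x (0 : LaurentPolynomial A) = 0 := by
  simp [resPair]

lemma DM_add (D : Derivation ℤ A A) (t : Aˣ) (x₁ x₂ : LaurentPolynomial A) :
    DM D t (x₁ + x₂) = DM D t x₁ + DM D t x₂ := by
  unfold DM
  rw [AddMonoidAlgebra.coeff_add, Finsupp.mapRange_add (map_add D), AddMonoidAlgebra.ofCoeff_add, mul_add]
  ring

lemma DM_single (D : Derivation ℤ A A) (t : Aˣ) (k : ℤ) (c : A) :
    DM D t (AddMonoidAlgebra.single k c) =
      AddMonoidAlgebra.single k (D c) + AddMonoidAlgebra.single (k + 1) ((↑t⁻¹ : A) * c) := by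
  unfold DM
  dsimp only
  rw [AddMonoidAlgebra.coeff_single, Finsupp.mapRange_single, AddMonoidAlgebra.ofCoeff_single]
  congr 1
  rw [single_eq_C_mul_T, single_eq_C_mul_T, map_mul, T_add]
  ring

lemma resPair_single_single (k m : ℤ) (c d : A) :
    resPair (AddMonoidAlgebra.single k c : LaurentPolynomial A) (AddMonoidAlgebra.single m d) =
      if m = -1 - k then ((Int.negOnePow (k + 1) : ℤˣ) : ℤ) • (c * d) else 0 := by
  unfold resPair
  rw [AddMonoidAlgebra.coeff_single, Finsupp.sum_single_index (by simp)]
  rw [AddMonoidAlgebra.coeff_single, Finsupp.single_apply]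
  split_ifs <;> simp

lemma key (D : Derivation ℤ A A) (t : Aˣ) (x g : LaurentPolynomial A) :
    D (resPair x g) = resPair (DM D t x) g + resPair x (DM D t g) := by
  induction x using AddMonoidAlgebra.induction_linear with
  | zero => simp [resPair_zero_left, DM, Finsupp.mapRange_zero]
  | add x₁ x₂ h₁ h₂ =>
      rw [resPair_add_left, map_add, DM_add, resPair_add_left, resPair_add_left, h₁, h₂]
      ring
  | single k c =>
      induction g using AddMonoidAlgebra.induction_linear with
      | zero => simp [resPair_zero_right, DM, Finsupp.mapRange_zero]
      | add g₁ g₂ h₁ h₂ =>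
          rw [resPair_add_right, map_add, DM_add, resPair_add_right, resPair_add_right, h₁, h₂]
          ring
      | single m d =>
          rw [DM_single, DM_single, resPair_add_left, resPair_add_right,
            resPair_single_single, resPair_single_single, resPair_single_single,
            resPair_single_single, resPair_single_single]
          by_cases h : m = -1 - k
          · subst h
            rw [if_pos rfl, if_pos rfl, if_neg (by omega), if_pos rfl, if_neg (by omega),
              add_zero, add_zero, map_zsmul, D.leibniz, ← smul_add]
            congr 1
            simp only [smul_eq_mul]
            ring
          · by_cases h2 : m = -2 - k
            · subst h2
              rw [if_neg (by omega), if_neg (by omega), if_pos (by omega), if_neg (by omega),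
                if_pos (by omega), map_zero, zero_add, zero_add]
              have e : (k + 1 + 1 : ℤ) = (k + 1) + 1 := by ring
              rw [e, Int.negOnePow_succ, Units.val_neg, neg_smul,
                show ((↑t⁻¹ : A) * c * d) = c * ((↑t⁻¹ : A) * d) from by ring]
              simp
            · rw [if_neg h, if_neg h, if_neg (by omega), if_neg h, if_neg (by omega)]
              simp

/-- The residue pairing is horizontal for the connections:
`∂⟨x, g⟩ = ⟨∂x, g⟩ + ⟨x, ∂g⟩` for `x ∈ I^{a,b}`, `g ∈ I^{-b,-a}`. -/
theorem resPair_horizontal [Algebra ℚ A] (D : Derivation ℤ A A) (t : Aˣ)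
    (ht : D (↑t : A) = 1) (a b : ℤ) (hab : a ≤ b) :
    ∀ x ∈ Ipow (A := A) a, ∀ g ∈ Ipow (A := A) (-b),
      D (resPair x g) = resPair (DM D t x) g + resPair x (DM D t g) := by
  intro x _ g _
  exact key D t x g
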